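/- Let P_{G,c} be the st-connectivity span program of a weighted multigraph G. A vector |w⟩ in the span of directed edges satisfies A|w⟩ = |s⟩ - |t⟩ if and only if it arises from a unit st-flow: specifically, if θ is a unit st-flow on G then |w⟩ = (1/2)Σ_{(u,v,λ)} (θ(u,v,λ)/√c({u,v},λ)) |u,v,λ⟩ satisfies A|w⟩ = τ; conversely, if A|w⟩ = τ, then θ(u,v,λ) := √c({u,v},λ)(⟨w|u,v,λ⟩ - ⟨w|v,u,λ⟩) is a unit st-flow on G. -/

import Mathlib

open scoped ENNReal

namespace STConn

variable {V E : Type*}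

/-- `v` is an endpoint of edge `e`. -/
def Touches (ends : E → V × V) (e : E) (v : V) : Prop :=
  (ends e).1 = v ∨ (ends e).2 = v

/-- Net flow out of vertex `v` for an edge-valued function `θ` (value along the
fixed orientation of each edge). -/
noncomputable def netflow [Fintype E] [DecidableEq V] (ends : E → V × V) (θ : E → ℝ) (v : V) : ℝ :=
  ∑ e, θ e * ((if (ends e).1 = v then (1:ℝ) else 0) - (if (ends e).2 = v then 1 else 0))

/-- `θ` is a unit `st`-flow: net flow `+1` at `s`, `-1` at `t`, `0` elsewhere. -/
def IsUnitFlow [Fintype E] [DecidableEq V] (ends : E → V × V) (s t : V) (θ : E → ℝ) : Prop :=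
  ∀ v, netflow ends θ v = (if v = s then (1:ℝ) else 0) - (if v = t then 1 else 0)

/-- Energy of a flow with respect to edge weights `c`. -/
noncomputable def energy [Fintype E] (c : E → ℝ) (θ : E → ℝ) : ℝ :=
  ∑ e, θ e ^ 2 / c e

/-- Effective resistance between `s` and `t`, restricted to flows supported on `S`
(taking value `∞` if no unit `st`-flow supported on `S` exists). -/
noncomputable def effResOn [Fintype E] [DecidableEq V] (ends : E → V × V) (c : E → ℝ)
    (S : Set E) (s t : V) : ℝ≥0∞ :=
  ⨅ θ : {θ : E → ℝ // IsUnitFlow ends s t θ ∧ ∀ e ∉ S, θ e = 0},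
    ENNReal.ofReal (energy c θ.1)

/-- Effective resistance between `s` and `t` in the network `(ends, c)`. -/
noncomputable def effRes [Fintype E] [DecidableEq V] (ends : E → V × V) (c : E → ℝ)
    (s t : V) : ℝ≥0∞ :=
  effResOn ends c Set.univ s t

end STConn
namespace STConn

variable {V E : Type*}

/-- Endpoints of a directed edge: `(e, true)` is `e` with its fixed orientation,
`(e, false)` is the reversal. -/
def dend (ends : E → V × V) (p : E × Bool) : V × V :=
  if p.2 then ends p.1 else ((ends p.1).2, (ends p.1).1)

/-- The span program operator `A = ∑ √c(e) (|u⟩-|v⟩)⟨u,v,λ|` of the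
`st`-connectivity span program `P_{G,c}`, applied to a vector `w` of the space
`H` spanned by directed edges; the result lives in the vertex space `U`. -/
noncomputable def Amap [Fintype E] [DecidableEq V] (ends : E → V × V) (c : E → ℝ)
    (w : E × Bool → ℝ) : V → ℝ := fun v =>
  ∑ p : E × Bool, Real.sqrt (c p.1) * w p *
    ((if (dend ends p).1 = v then (1:ℝ) else 0) - (if (dend ends p).2 = v then 1 else 0))

/-- The target vector `τ = |s⟩ - |t⟩`. -/
def tau [DecidableEq V] (s t : V) : V → ℝ := fun v =>
  (if v = s then (1:ℝ) else 0) - (if v = t then 1 else 0)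

/-- A unit `st`-flow presented as an antisymmetric function on directed edges. -/
def IsUnitFlowD [Fintype E] [DecidableEq V] (ends : E → V × V) (s t : V)
    (θ : E × Bool → ℝ) : Prop :=
  (∀ p : E × Bool, θ (p.1, !p.2) = -θ p) ∧
  ∀ v, (∑ p : E × Bool, θ p * (if (dend ends p).1 = v then (1:ℝ) else 0)) = tau s t v

end STConn

open STConn in
/-- Positive witnesses of the `st`-connectivity span program `P_{G,c}`
correspond exactly to unit `st`-flows: if `θ` is a unit `st`-flow then
`|w⟩ = (1/2) Σ_p (θ(p)/√c(p)) |p⟩` satisfies `A|w⟩ = τ`, and conversely for any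
`w` with `A|w⟩ = τ` the function `θ(p) = √c(p) (⟨w|p⟩ - ⟨w|p̄⟩)` is a unit
`st`-flow. -/
theorem stmt_5 {V E : Type} [Fintype E] [DecidableEq V]
    (ends : E → V × V) (c : E → ℝ) (hc : ∀ e, 0 < c e) (s t : V) :
    (∀ θ : E × Bool → ℝ, IsUnitFlowD ends s t θ →
      Amap ends c (fun p => (1 / 2) * (θ p / Real.sqrt (c p.1))) = tau s t) ∧
    (∀ w : E × Bool → ℝ, Amap ends c w = tau s t →
      IsUnitFlowD ends s t (fun p => Real.sqrt (c p.1) * (w p - w (p.1, !p.2)))) := by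

  have flip : ∀ f : E × Bool → ℝ, ∑ p : E × Bool, f (p.1, !p.2) = ∑ p : E × Bool, f p := by
    intro f
    exact Fintype.sum_equiv ((Equiv.refl E).prodCongr (Function.Involutive.toPerm Bool.not fun b => Bool.not_not b))
      (fun p => f (p.1, !p.2)) f (fun p => rfl)
  have hd1 : ∀ p : E × Bool, (dend ends (p.1, !p.2)).1 = (dend ends p).2 := by
    rintro ⟨e, b⟩; cases b <;> simp [dend]
  have hd2 : ∀ p : E × Bool, (dend ends (p.1, !p.2)).2 = (dend ends p).1 := by
    rintro ⟨e, b⟩; cases b <;> simp [dend]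
  have hs : ∀ e, Real.sqrt (c e) ≠ 0 := fun e => (Real.sqrt_pos.mpr (hc e)).ne'
  constructor
  · intro θ hθ
    funext v
    have key : ∀ p : E × Bool, Real.sqrt (c p.1) * ((1 / 2) * (θ p / Real.sqrt (c p.1))) *
        ((if (dend ends p).1 = v then (1:ℝ) else 0) - (if (dend ends p).2 = v then 1 else 0))
        = θ p / 2 * (if (dend ends p).1 = v then (1:ℝ) else 0)
          - θ p / 2 * (if (dend ends p).2 = v then (1:ℝ) else 0) := by
      intro p
      have := hs p.1
      split_ifs <;> field_simp <;> ring
    have h2 : ∑ p : E × Bool, θ p / 2 * (if (dend ends p).2 = v then (1:ℝ) else 0)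
        = - ∑ p : E × Bool, θ p / 2 * (if (dend ends p).1 = v then (1:ℝ) else 0) := by
      rw [← flip (fun p => θ p / 2 * (if (dend ends p).1 = v then (1:ℝ) else 0)),
        ← Finset.sum_neg_distrib]
      refine Finset.sum_congr rfl fun p _ => ?_
      rw [hθ.1 p, hd1]; ring
    calc Amap ends c (fun p => 1 / 2 * (θ p / Real.sqrt (c p.1))) v
        = ∑ p : E × Bool, (θ p / 2 * (if (dend ends p).1 = v then (1:ℝ) else 0)
          - θ p / 2 * (if (dend ends p).2 = v then (1:ℝ) else 0)) := by
          simp only [Amap]; exact Finset.sum_congr rfl fun p _ => key p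
      _ = (∑ p : E × Bool, θ p / 2 * (if (dend ends p).1 = v then (1:ℝ) else 0))
          - ∑ p : E × Bool, θ p / 2 * (if (dend ends p).2 = v then (1:ℝ) else 0) :=
          Finset.sum_sub_distrib _ _
      _ = ∑ p : E × Bool, θ p * (if (dend ends p).1 = v then (1:ℝ) else 0) := by
          rw [h2, sub_neg_eq_add, ← Finset.sum_add_distrib]
          refine Finset.sum_congr rfl fun p _ => by ring
      _ = tau s t v := hθ.2 v
  · intro w hw
    refine ⟨fun p => ?_, fun v => ?_⟩
    · show Real.sqrt (c p.1) * (w (p.1, !p.2) - w ((p.1, !p.2).1, !(p.1, !p.2).2)) = _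
      simp only [Bool.not_not]
      ring
    · have h3 : ∑ p : E × Bool, Real.sqrt (c p.1) * w (p.1, !p.2) *
          (if (dend ends p).1 = v then (1:ℝ) else 0)
          = ∑ p : E × Bool, Real.sqrt (c p.1) * w p *
          (if (dend ends p).2 = v then (1:ℝ) else 0) := by
        rw [← flip (fun p => Real.sqrt (c p.1) * w p *
          (if (dend ends p).2 = v then (1:ℝ) else 0))]
        refine Finset.sum_congr rfl fun p _ => ?_
        rw [hd2]
      calc ∑ p : E × Bool, (Real.sqrt (c p.1) * (w p - w (p.1, !p.2))) *
            (if (dend ends p).1 = v then (1:ℝ) else 0)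
          = (∑ p : E × Bool, Real.sqrt (c p.1) * w p *
            (if (dend ends p).1 = v then (1:ℝ) else 0))
            - ∑ p : E × Bool, Real.sqrt (c p.1) * w (p.1, !p.2) *
            (if (dend ends p).1 = v then (1:ℝ) else 0) := by
            rw [← Finset.sum_sub_distrib]
            exact Finset.sum_congr rfl fun p _ => by ring
        _ = ∑ p : E × Bool, Real.sqrt (c p.1) * w p *
            ((if (dend ends p).1 = v then (1:ℝ) else 0)
              - (if (dend ends p).2 = v then 1 else 0)) := by
            rw [h3, ← Finset.sum_sub_distrib]
            exact Finset.sum_congr rfl fun p _ => by ring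
        _ = tau s t v := by
            have := congrFun hw v
            simpa [Amap] using this
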